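/- Let p ∈ ℕ, a > 0, and b ∈ ℝ. Define the Hida-Matérn kernel k_{H,p}(τ; a, b) = cos(bτ) · m_p(τ; a), where m_p(τ; a) = e^{−a|τ|} · (p!/(2p)!) · Σ_{i=0}^{p} ((p+i)!/(i!(p−i)!)) (2a|τ|)^{p−i}. Then for every ω ∈ ℝ, ∫_ℝ k_{H,p}(τ; a, b) e^{−iωτ} dτ = (2a)^{2p+1} (p!)² / (2 · (2p)!) · [ ((ω − b)² + a²)^{−(p+1)} + ((ω + b)² + a²)^{−(p+1)} ]. In particular the Fourier transform of k_{H,p}(·; a, b) is nonnegative, real-valued, and even. -/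

import Mathlib

open MeasureTheory Real Set Filter Topology Finset

/-- The Matérn kernel of half-integer order `ν = p + 1/2` with decay rate `a`. -/
noncomputable def maternKernel (p : ℕ) (a : ℝ) (τ : ℝ) : ℝ :=
  Real.exp (-a * |τ|) * ((p.factorial : ℝ) / ((2 * p).factorial : ℝ)) *
    ∑ i ∈ Finset.range (p + 1),
      (((p + i).factorial : ℝ) / ((i.factorial : ℝ) * ((p - i).factorial : ℝ))) *
        (2 * a * |τ|) ^ (p - i)

/-- The Hida-Matérn kernel with smoothness `p`, inverse length-scale `a`,
and frequency shift `b`. -/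
noncomputable def hidaMaternKernel (p : ℕ) (a b : ℝ) (τ : ℝ) : ℝ :=
  Real.cos (b * τ) * maternKernel p a τ



lemma hockey (r : ℕ) : ∀ n : ℕ, ∑ k ∈ range (n+1), (r+k).choose k = (r+n+1).choose n := by
  intro n
  induction n with
  | zero => simp
  | succ n ih =>
    rw [sum_range_succ, ih]
    have h : r + (n+1) + 1 = (r + n + 1) + 1 := by ring
    rw [h, Nat.choose_succ_succ]
    have h2 : r + (n+1) = (r+n)+1 := by ring
    rw [h2, Nat.add_comm]

lemma vand (r : ℕ) : ∀ m s : ℕ,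
    ∑ k ∈ range (m+1), (r+k).choose k * (s+(m-k)).choose (m-k) = (r+s+m+1).choose m := by
  intro m
  induction m with
  | zero => simp
  | succ m ihm =>
    intro s
    induction s with
    | zero =>
      have h : ∀ k ∈ range (m+2), (r+k).choose k * (0+(m+1-k)).choose (m+1-k) = (r+k).choose k := by
        intro k hk; simp
      rw [sum_congr rfl h, hockey r (m+1)]; norm_num
    | succ s ihs =>
      have split : ∀ k ∈ range (m+1),
          (r+k).choose k * ((s+1)+(m+1-k)).choose (m+1-k)
            = (r+k).choose k * (s+(m+1-k)).choose (m+1-k)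
              + (r+k).choose k * ((s+1)+(m-k)).choose (m-k) := by
        intro k hk
        rw [Finset.mem_range] at hk
        have h1 : m + 1 - k = (m - k) + 1 := by omega
        have h2 : s + 1 + (m - k + 1) = (s + (m - k + 1)) + 1 := by ring
        have h3 : s + (m - k + 1) = (s+1) + (m - k) := by ring
        rw [h1, h2, Nat.choose_succ_succ, h3, Nat.mul_add]
        ring
      rw [sum_range_succ, sum_congr rfl split, sum_add_distrib, ihm (s+1)]
      have hlast : (r+(m+1)).choose (m+1) * ((s+1)+(m+1-(m+1))).choose (m+1-(m+1))
          = (r+(m+1)).choose (m+1) * ((s+(m+1-(m+1))).choose (m+1-(m+1))) := by simp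
      rw [hlast]
      rw [add_right_comm, ← sum_range_succ (fun k => (r+k).choose k * (s+(m+1-k)).choose (m+1-k)) (m+1)]
      rw [ihs]
      have pascal : (r+(s+1)+(m+1)+1).choose (m+1)
          = (r+s+(m+1)+1).choose m + (r+s+(m+1)+1).choose (m+1) := by
        have h : r+(s+1)+(m+1)+1 = (r+s+(m+1)+1)+1 := by ring
        rw [h, Nat.choose_succ_succ]
      rw [pascal]
      ring

lemma half {R : Type*} [CommRing R] (p : ℕ) (x y : R)
    (vand : ∀ m s : ℕ,
      ∑ k ∈ range (m+1), (p+k).choose k * (s+(m-k)).choose (m-k) = (p+s+m+1).choose m) :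
    ∑ i ∈ range (p+1), ((p+i).choose i : R) * ((x+y)^(p-i) * (x^i * y^(p+1)))
      = ∑ m ∈ range (p+1), ((2*p+1).choose m : R) * (x^m * y^(2*p+1-m)) := by
  have step1 : ∀ i ∈ range (p+1),
      ((p+i).choose i : R) * ((x+y)^(p-i) * (x^i * y^(p+1)))
        = ∑ k ∈ range (p+1-i),
            (((p+i).choose i * (p-i).choose k : ℕ) : R) * (x^(i+k) * y^(2*p+1-(i+k))) := by
    intro i hi
    rw [Finset.mem_range, Nat.lt_succ_iff] at hi
    have hr : p + 1 - i = (p - i) + 1 := by omega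
    rw [hr, add_pow, Finset.sum_mul, Finset.mul_sum]
    refine sum_congr rfl fun k hk => ?_
    rw [Finset.mem_range, Nat.lt_succ_iff] at hk
    have he1 : 2*p+1-(i+k) = (p+1) + (p-i-k) := by omega
    have he2 : i + k = i + k := rfl
    push_cast
    rw [he1, pow_add x i k, pow_add y (p+1) (p-i-k)]
    ring
  rw [sum_congr rfl step1]
  rw [← sum_range_diag_flip (p+1)
      (fun i k => (((p+i).choose i * (p-i).choose k : ℕ) : R) * (x^(i+k) * y^(2*p+1-(i+k))))]
  refine sum_congr rfl fun m hm => ?_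
  rw [Finset.mem_range, Nat.lt_succ_iff] at hm
  have inner : ∀ k ∈ range (m+1),
      (((p+k).choose k * (p-k).choose (m-k) : ℕ) : R) * (x^(k+(m-k)) * y^(2*p+1-(k+(m-k))))
        = (((p+k).choose k * ((p-m)+(m-k)).choose (m-k) : ℕ) : R) * (x^m * y^(2*p+1-m)) := by
    intro k hk
    rw [Finset.mem_range, Nat.lt_succ_iff] at hk
    have h1 : k + (m-k) = m := by omega
    have h2 : (p-m)+(m-k) = p-k := by omega
    rw [h1, h2]
  rw [sum_congr rfl inner, ← Finset.sum_mul, ← Nat.cast_sum, vand m (p-m)]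
  have h3 : p+(p-m)+m+1 = 2*p+1 := by omega
  rw [h3]

lemma key {R : Type*} [CommRing R] (p : ℕ) (x y : R)
    (vand : ∀ r : ℕ, ∀ m s : ℕ,
      ∑ k ∈ range (m+1), (r+k).choose k * (s+(m-k)).choose (m-k) = (r+s+m+1).choose m) :
    ∑ i ∈ range (p+1), ((p+i).choose i : R) * ((x+y)^(p-i) * (x^i * y^(p+1) + x^(p+1) * y^i))
      = (x+y)^(2*p+1) := by
  have expand : ∀ i ∈ range (p+1),
      ((p+i).choose i : R) * ((x+y)^(p-i) * (x^i * y^(p+1) + x^(p+1) * y^i))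
        = ((p+i).choose i : R) * ((x+y)^(p-i) * (x^i * y^(p+1)))
          + ((p+i).choose i : R) * ((y+x)^(p-i) * (y^i * x^(p+1))) := by
    intro i _; ring
  rw [sum_congr rfl expand, sum_add_distrib, half p x y (vand p), half p y x (vand p)]
  -- RHS: (x+y)^(2p+1) = Σ_{m<2p+2} C x^m y^{..}
  rw [add_pow]
  have hsplit : 2*p+1+1 = (p+1) + (p+1) := by omega
  rw [hsplit, Finset.sum_range_add (fun m => x^m * y^(2*p+1-m) * ((2*p+1).choose m : R)) (p+1) (p+1)]
  rw [← Finset.sum_range_reflect (fun k => x^(p+1+k) * y^(2*p+1-(p+1+k)) * ((2*p+1).choose (p+1+k) : R)) (p+1)]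
  congr 1
  · exact sum_congr rfl fun m hm => by ring
  refine sum_congr rfl fun k hk => ?_
  rw [Finset.mem_range, Nat.lt_succ_iff] at hk
  have e1 : p+1-1-k = p-k := by omega
  have e2 : 2*p+1-(p+1+(p-k)) = k := by omega
  have e3 : 2*p+1-k = p+1+(p-k) := by omega
  have e4 : (2*p+1).choose (p+1+(p-k)) = (2*p+1).choose k := by
    rw [← e3]; exact Nat.choose_symm (by omega)
  rw [e1, e2, e4, ← e3]
  ring

lemma real_int {c : ℝ} (hc : 0 < c) (n : ℕ) :
    IntegrableOn (fun t : ℝ => t^n * Real.exp (-c*t)) (Ioi 0) := by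
  apply integrable_of_isBigO_exp_neg (half_pos hc)
    ((continuous_pow n).mul ((continuous_const.mul continuous_id).rexp)).continuousOn
  have h : Tendsto (fun t : ℝ => t^n * Real.exp (-c*t) / Real.exp (-(c/2)*t)) atTop (𝓝 0) := by
    have he : ∀ t : ℝ, t^n * Real.exp (-c*t) / Real.exp (-(c/2)*t) = t^n * Real.exp (-(c/2)*t) := by
      intro t
      rw [mul_div_assoc, ← Real.exp_sub]
      congr 2
      ring
    simp_rw [he]
    have h2 : Tendsto (fun t : ℝ => (c/2*t)^n * Real.exp (-(c/2*t))) atTop (𝓝 0) :=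
      (tendsto_pow_mul_exp_neg_atTop_nhds_zero n).comp (tendsto_id.const_mul_atTop (half_pos hc))
    have h3 := h2.div_const ((c/2)^n)
    simp only [zero_div] at h3
    apply h3.congr
    intro t
    rw [mul_pow, show -(c/2*t) = -(c/2)*t from by ring]
    have : (c/2)^n ≠ 0 := by positivity
    field_simp
  refine (Asymptotics.isLittleO_iff_tendsto' ?_ |>.mpr h).isBigO
  filter_upwards with t h
  exact absurd h (Real.exp_ne_zero _)

lemma renorm {z : ℂ} (t : ℝ) : (-(z*(t:ℂ))).re = -z.re*t := by
  simp [Complex.mul_re]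

lemma cnorm {z : ℂ} (m : ℕ) {t : ℝ} (ht : 0 < t) :
    ‖(t:ℂ)^m * Complex.exp (-(z*t))‖ = t^m * Real.exp (-z.re*t) := by
  rw [norm_mul, norm_pow, Complex.norm_exp,
    Complex.norm_real, Real.norm_eq_abs, abs_of_pos ht, renorm]

lemma cIntOn {z : ℂ} (hz : 0 < z.re) (n : ℕ) :
    IntegrableOn (fun t : ℝ => (t:ℂ)^n * Complex.exp (-(z*t))) (Ioi 0) := by
  refine Integrable.mono' (real_int hz n) ?_ ?_
  · exact ((Complex.continuous_ofReal.pow n).mul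
      ((continuous_const.mul Complex.continuous_ofReal).neg.cexp)).aestronglyMeasurable
  · filter_upwards [ae_restrict_mem measurableSet_Ioi] with t ht
    exact le_of_eq (cnorm n ht)

lemma lap {z : ℂ} (hz : 0 < z.re) : ∀ n : ℕ,
    ∫ t in Ioi (0:ℝ), (t:ℂ)^n * Complex.exp (-(z*t)) = (n.factorial : ℂ) / z^(n+1) := by
  have hz0 : z ≠ 0 := fun h => by simp [h] at hz
  have texp : ∀ m : ℕ, Tendsto (fun t : ℝ => (t:ℂ)^m * Complex.exp (-(z*t))) atTop (𝓝 0) := by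
    intro m
    rw [tendsto_zero_iff_norm_tendsto_zero]
    have h2 : Tendsto (fun t : ℝ => (z.re*t)^m * Real.exp (-(z.re*t))) atTop (𝓝 0) :=
      (tendsto_pow_mul_exp_neg_atTop_nhds_zero m).comp (tendsto_id.const_mul_atTop hz)
    have h3 := h2.div_const (z.re^m)
    simp only [zero_div] at h3
    have h4 : Tendsto (fun t : ℝ => t^m * Real.exp (-z.re*t)) atTop (𝓝 0) := by
      apply h3.congr
      intro t
      rw [mul_pow, show -(z.re*t) = -z.re*t from by ring]
      have : z.re^m ≠ 0 := by positivity
      field_simp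
    apply squeeze_zero_norm' ?_ h4
    filter_upwards [eventually_gt_atTop (0:ℝ)] with t ht
    rw [Real.norm_eq_abs, abs_of_nonneg (norm_nonneg _), cnorm m ht]
  have h1 : ∀ x : ℝ, HasDerivAt (fun t : ℝ => -(z*t) : ℝ → ℂ) (-z) x := by
    intro x
    have := ((hasDerivAt_id ((x:ℝ):ℂ)).const_mul z).neg.comp_ofReal
    simpa using this
  intro n
  induction n with
  | zero =>
    have t0 : Tendsto (fun t : ℝ => -Complex.exp (-(z*t)) / z) atTop (𝓝 0) := by
      have := (texp 0).neg.div_const z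
      simpa using this
    have deriv : ∀ x ∈ Ici (0:ℝ), HasDerivAt (fun t : ℝ => -Complex.exp (-(z*t)) / z)
        ((fun t : ℝ => (t:ℂ)^0 * Complex.exp (-(z*t))) x) x := by
      intro x _
      have h3 := (h1 x).cexp.neg.div_const z
      refine h3.congr_deriv (Eq.symm ?_)
      simp only [pow_zero, one_mul]
      rw [eq_div_iff hz0]
      ring
    rw [integral_Ioi_of_hasDerivAt_of_tendsto' deriv (cIntOn hz 0) t0]
    simp [hz0]
    field_simp
  | succ n ih =>
    have tt : Tendsto (fun t : ℝ => -((t:ℂ)^(n+1) * Complex.exp (-(z*t))) / z) atTop (𝓝 0) := by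
      have := (texp (n+1)).neg.div_const z
      simpa using this
    have deriv : ∀ x ∈ Ici (0:ℝ),
        HasDerivAt (fun t : ℝ => -((t:ℂ)^(n+1) * Complex.exp (-(z*t))) / z)
        ((fun t : ℝ => ((t:ℂ)^(n+1) * Complex.exp (-(z*t))
          - ((n:ℂ)+1)/z * ((t:ℂ)^n * Complex.exp (-(z*t))))) x) x := by
      intro x _
      have hp : HasDerivAt (fun t : ℝ => ((t:ℂ))^(n+1)) (((n:ℂ)+1) * (x:ℂ)^n) x := by
        have h := (hasDerivAt_pow (n+1) ((x:ℝ):ℂ)).comp_ofReal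
        simp only [Nat.add_sub_cancel] at h
        convert h using 2
        push_cast
        ring
      have h2 := (hp.mul (h1 x).cexp).neg.div_const z
      refine h2.congr_deriv (Eq.symm ?_)
      rw [eq_div_iff hz0]
      field_simp
      ring
    have intg : IntegrableOn (fun t : ℝ => ((t:ℂ)^(n+1) * Complex.exp (-(z*t))
        - ((n:ℂ)+1)/z * ((t:ℂ)^n * Complex.exp (-(z*t))))) (Ioi 0) :=
      (cIntOn hz (n+1)).sub ((cIntOn hz n).const_mul _)
    have key := integral_Ioi_of_hasDerivAt_of_tendsto' deriv intg tt
    rw [integral_sub (cIntOn hz (n+1)) ((cIntOn hz n).const_mul _), integral_const_mul, ih] at key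
    simp only [Complex.ofReal_zero, ne_eq, Nat.succ_ne_zero, not_false_iff, zero_pow,
      zero_mul, neg_zero, zero_div, sub_zero, zero_sub, neg_neg] at key
    rw [sub_eq_zero] at key
    rw [key, Nat.factorial_succ]
    push_cast
    rw [div_mul_div_comm, ← pow_succ']
noncomputable def hmF (a : ℝ) (k : ℕ) (c : ℝ) (τ : ℝ) : ℂ :=
  ((|τ|:ℝ):ℂ)^k * Complex.exp (-(a:ℂ) * ((|τ|:ℝ):ℂ)) * Complex.exp (-Complex.I * (c:ℂ) * (τ:ℂ))

lemma real_int' {c : ℝ} (hc : 0 < c) (n : ℕ) :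
    IntegrableOn (fun t : ℝ => t^n * Real.exp (-c*t)) (Ioi 0) := real_int hc n

lemma lap' {z : ℂ} (hz : 0 < z.re) : ∀ n : ℕ,
    ∫ t in Ioi (0:ℝ), (t:ℂ)^n * Complex.exp (-(z*t)) = (n.factorial : ℂ) / z^(n+1) := lap hz

lemma abs_int {a : ℝ} (ha : 0 < a) (k : ℕ) :
    Integrable (fun τ : ℝ => |τ|^k * Real.exp (-a*|τ|)) := by
  have hIoi : IntegrableOn (fun τ : ℝ => |τ|^k * Real.exp (-a*|τ|)) (Ioi 0) := by
    refine (real_int' ha k).congr_fun ?_ measurableSet_Ioi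
    intro t ht
    show t^k * rexp (-a*t) = |t|^k * rexp (-a*|t|)
    rw [abs_of_pos ht]
  have hIic : IntegrableOn (fun τ : ℝ => |τ|^k * Real.exp (-a*|τ|)) (Iic 0) := by
    rw [← Measure.map_neg_eq_self (volume : Measure ℝ)]
    have m : MeasurableEmbedding fun x : ℝ => -x := (Homeomorph.neg ℝ).measurableEmbedding
    rw [m.integrableOn_map_iff]
    simp_rw [Function.comp_def, abs_neg, neg_preimage, neg_Iic, neg_zero]
    exact Iff.mpr integrableOn_Ici_iff_integrableOn_Ioi hIoi
  rw [← integrableOn_univ, ← Set.Iic_union_Ioi (a := (0:ℝ))]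
  exact hIic.union hIoi

lemma hmF_norm (a : ℝ) (k : ℕ) (c : ℝ) (τ : ℝ) :
    ‖hmF a k c τ‖ = |τ|^k * Real.exp (-a*|τ|) := by
  unfold hmF
  rw [norm_mul, norm_mul, norm_pow, Complex.norm_exp,
    Complex.norm_exp, Complex.norm_real, Real.norm_eq_abs,
    abs_abs]
  have h1 : (-(a:ℂ) * ((|τ|:ℝ):ℂ)).re = -a*|τ| := by simp
  have h2 : (-Complex.I * (c:ℂ) * (τ:ℂ)).re = 0 := by simp
  rw [h1, h2, Real.exp_zero, mul_one]

lemma hmF_int {a : ℝ} (ha : 0 < a) (k : ℕ) (c : ℝ) : Integrable (hmF a k c) := by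
  refine (abs_int ha k).mono' ?_ ?_
  · refine Continuous.aestronglyMeasurable ?_
    unfold hmF
    fun_prop
  · filter_upwards with τ
    exact le_of_eq (hmF_norm a k c τ)

lemma hmF_val {a : ℝ} (ha : 0 < a) (k : ℕ) (c : ℝ) :
    ∫ τ : ℝ, hmF a k c τ
      = (k.factorial : ℂ)/((a:ℂ) - Complex.I*c)^(k+1)
        + (k.factorial : ℂ)/((a:ℂ) + Complex.I*c)^(k+1) := by
  have hrep : (0:ℝ) < ((a:ℂ) + Complex.I*c).re := by simpa using ha
  have hrem : (0:ℝ) < ((a:ℂ) - Complex.I*c).re := by simpa using ha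
  have hintIic : IntegrableOn (hmF a k c) (Iic 0) := (hmF_int ha k c).integrableOn
  have hintIoi : IntegrableOn (hmF a k c) (Ioi 0) := (hmF_int ha k c).integrableOn
  have hsplit : ∫ τ : ℝ, hmF a k c τ
      = (∫ τ in Iic (0:ℝ), hmF a k c τ) + ∫ τ in Ioi (0:ℝ), hmF a k c τ := by
    rw [← setIntegral_union (Iic_disjoint_Ioi le_rfl) measurableSet_Ioi hintIic hintIoi,
      Set.Iic_union_Ioi, setIntegral_univ]
  have e1 : ∀ t ∈ Ioi (0:ℝ), hmF a k c t
      = (t:ℂ)^k * Complex.exp (-(((a:ℂ) + Complex.I*c) * t)) := by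
    intro t ht
    unfold hmF
    rw [abs_of_pos ht, mul_assoc, ← Complex.exp_add]
    congr 2
    push_cast
    ring
  have hIoi : ∫ τ in Ioi (0:ℝ), hmF a k c τ
      = (k.factorial : ℂ)/((a:ℂ) + Complex.I*c)^(k+1) := by
    rw [setIntegral_congr_fun measurableSet_Ioi e1, lap' hrep k]
  have e2 : ∀ t ∈ Ioi (0:ℝ), hmF a k c (-t)
      = (t:ℂ)^k * Complex.exp (-(((a:ℂ) - Complex.I*c) * t)) := by
    intro t ht
    unfold hmF
    rw [abs_neg, abs_of_pos ht, mul_assoc, ← Complex.exp_add]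
    congr 2
    push_cast
    ring
  have hIic : ∫ τ in Iic (0:ℝ), hmF a k c τ
      = (k.factorial : ℂ)/((a:ℂ) - Complex.I*c)^(k+1) := by
    have hflip : ∫ x in Iic (0:ℝ), hmF a k c x = ∫ x in Ioi (-(0:ℝ)), hmF a k c (-x) := by
      rw [← integral_comp_neg_Iic]
      refine setIntegral_congr_fun measurableSet_Iic fun x _ => ?_
      rw [neg_neg]
    rw [hflip, neg_zero, setIntegral_congr_fun measurableSet_Ioi e2, lap' hrem k]
  rw [hsplit, hIic, hIoi]

lemma key' {R : Type*} [CommRing R] (p : ℕ) (x y : R) :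
    ∑ i ∈ range (p+1), ((p+i).choose i : R) * ((x+y)^(p-i) * (x^i * y^(p+1) + x^(p+1) * y^i))
      = (x+y)^(2*p+1) := key p x y (fun r m s => vand r m s)

lemma Mval {a : ℝ} (ha : 0 < a) (p : ℕ) (c : ℝ) :
    ∑ i ∈ range (p+1),
      ((p.factorial : ℂ)/((2*p).factorial : ℂ)
        * (((p+i).factorial : ℂ)/((i.factorial : ℂ)*((p-i).factorial : ℂ))) * (2*(a:ℂ))^(p-i))
        * ((((p-i).factorial : ℂ))/(((a:ℂ) - Complex.I*c)^(p-i+1))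
            + (((p-i).factorial : ℂ))/(((a:ℂ) + Complex.I*c)^(p-i+1)))
      = (2*(a:ℂ))^(2*p+1) * (p.factorial:ℂ)^2 / ((2*p).factorial:ℂ)
          * ((((c:ℂ)^2 + (a:ℂ)^2)^(p+1))⁻¹) := by
  set x := (a:ℂ) + Complex.I*c with hxd
  set y := (a:ℂ) - Complex.I*c with hyd
  have hx : x ≠ 0 := by
    intro h
    have := congrArg Complex.re h
    simp [hxd] at this
    linarith
  have hy : y ≠ 0 := by
    intro h
    have := congrArg Complex.re h
    simp [hyd] at this
    linarith
  have hadd : x + y = 2*(a:ℂ) := by rw [hxd, hyd]; ring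
  have hmul : x * y = (c:ℂ)^2 + (a:ℂ)^2 := by
    rw [hxd, hyd]
    linear_combination (-(c:ℂ)^2) * Complex.I_sq
  have hxyne : ((c:ℂ)^2 + (a:ℂ)^2)^(p+1) ≠ 0 := by
    rw [← hmul]; exact pow_ne_zero _ (mul_ne_zero hx hy)
  refine mul_right_cancel₀ hxyne ?_
  rw [mul_assoc, inv_mul_cancel₀ hxyne, mul_one, ← hmul, sum_mul, ← hadd]
  have hterm : ∀ i ∈ range (p+1),
      ((p.factorial : ℂ)/((2*p).factorial : ℂ)
        * (((p+i).factorial : ℂ)/((i.factorial : ℂ)*((p-i).factorial : ℂ))) * (x+y)^(p-i))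
        * ((((p-i).factorial : ℂ))/(y^(p-i+1)) + (((p-i).factorial : ℂ))/(x^(p-i+1)))
        * (x*y)^(p+1)
      = ((p.factorial:ℂ) * (p.factorial:ℂ) / ((2*p).factorial:ℂ))
          * (((p+i).choose i : ℂ) * ((x+y)^(p-i) * (x^i * y^(p+1) + x^(p+1) * y^i))) := by
    intro i hi
    rw [Finset.mem_range, Nat.lt_succ_iff] at hi
    have hC : ((p+i).factorial : ℂ) = ((p+i).choose i : ℂ) * (i.factorial:ℂ) * (p.factorial:ℂ) := by
      have hnat : (p+i).choose i * i.factorial * p.factorial = (p+i).factorial := by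
        have h := Nat.choose_mul_factorial_mul_factorial (Nat.le_add_left i p)
        rwa [Nat.add_sub_cancel] at h
      exact_mod_cast hnat.symm
    have hxp : x^(p+1) = x^(p-i+1) * x^i := by rw [← pow_add]; congr 1; omega
    have hyp : y^(p+1) = y^(p-i+1) * y^i := by rw [← pow_add]; congr 1; omega
    have hi0 : (i.factorial:ℂ) ≠ 0 := Nat.cast_ne_zero.mpr i.factorial_ne_zero
    have hpi0 : ((p-i).factorial:ℂ) ≠ 0 := Nat.cast_ne_zero.mpr (p-i).factorial_ne_zero
    have h2p0 : ((2*p).factorial:ℂ) ≠ 0 := Nat.cast_ne_zero.mpr (2*p).factorial_ne_zero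
    have hxq : x^(p-i+1) ≠ 0 := pow_ne_zero _ hx
    have hyq : y^(p-i+1) ≠ 0 := pow_ne_zero _ hy
    rw [mul_pow x y, hxp, hyp, hC]
    field_simp
    ring
  rw [Finset.sum_congr rfl hterm, ← Finset.mul_sum, key' p x y]
  ring

/-- The Fourier transform of the Hida-Matérn kernel is the (nonnegative, real-valued,
even) power spectral density
`(2a)^{2p+1} (p!)² / (2·(2p)!) · [((ω-b)² + a²)^{-(p+1)} + ((ω+b)² + a²)^{-(p+1)}]`. -/
theorem fourier_hidaMatern (p : ℕ) (a b : ℝ) (ha : 0 < a) :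
    ∀ ω : ℝ,
      (∫ τ : ℝ, (hidaMaternKernel p a b τ : ℂ) * Complex.exp (-Complex.I * ω * τ)
        = (((2 * a) ^ (2 * p + 1) * (p.factorial : ℝ) ^ 2 / (2 * ((2 * p).factorial : ℝ)) *
            ((((ω - b) ^ 2 + a ^ 2) ^ (p + 1))⁻¹ + (((ω + b) ^ 2 + a ^ 2) ^ (p + 1))⁻¹) : ℝ) : ℂ))
      ∧ 0 ≤ (2 * a) ^ (2 * p + 1) * (p.factorial : ℝ) ^ 2 / (2 * ((2 * p).factorial : ℝ)) *
            ((((ω - b) ^ 2 + a ^ 2) ^ (p + 1))⁻¹ + (((ω + b) ^ 2 + a ^ 2) ^ (p + 1))⁻¹)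
      ∧ (2 * a) ^ (2 * p + 1) * (p.factorial : ℝ) ^ 2 / (2 * ((2 * p).factorial : ℝ)) *
            ((((-ω - b) ^ 2 + a ^ 2) ^ (p + 1))⁻¹ + (((-ω + b) ^ 2 + a ^ 2) ^ (p + 1))⁻¹)
        = (2 * a) ^ (2 * p + 1) * (p.factorial : ℝ) ^ 2 / (2 * ((2 * p).factorial : ℝ)) *
            ((((ω - b) ^ 2 + a ^ 2) ^ (p + 1))⁻¹ + (((ω + b) ^ 2 + a ^ 2) ^ (p + 1))⁻¹) := by
  intro ω
  refine ⟨?_, by positivity, by ring_nf⟩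
  set CC : ℕ → ℂ := fun i => (p.factorial : ℂ)/((2*p).factorial : ℂ)
      * (((p+i).factorial : ℂ)/((i.factorial : ℂ)*((p-i).factorial : ℂ))) * (2*(a:ℂ))^(p-i)
    with hCC
  have hcos : ∀ τ : ℝ, Complex.cos ((b:ℂ)*(τ:ℂ)) * Complex.exp (-Complex.I * (ω:ℂ) * (τ:ℂ))
      = (Complex.exp (-Complex.I * ((ω:ℂ)-(b:ℂ)) * (τ:ℂ))
          + Complex.exp (-Complex.I * ((ω:ℂ)+(b:ℂ)) * (τ:ℂ)))/2 := by
    intro τ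
    rw [show Complex.cos ((b:ℂ)*(τ:ℂ))
        = (Complex.exp ((b:ℂ)*(τ:ℂ)*Complex.I) + Complex.exp (-((b:ℂ)*(τ:ℂ))*Complex.I))/2 from rfl]
    rw [div_mul_eq_mul_div, add_mul, ← Complex.exp_add, ← Complex.exp_add]
    congr 3 <;> ring
  have hpt : ∀ τ : ℝ, (hidaMaternKernel p a b τ : ℂ) * Complex.exp (-Complex.I * ω * τ)
      = ∑ i ∈ range (p+1), CC i * ((hmF a (p-i) (ω-b) τ + hmF a (p-i) (ω+b) τ)/2) := by
    intro τ
    unfold hidaMaternKernel maternKernel hmF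
    push_cast
    rw [Finset.mul_sum, Finset.mul_sum, Finset.sum_mul]
    refine Finset.sum_congr rfl fun i hi => ?_
    simp only [hCC]
    linear_combination (Complex.exp (-(a:ℂ) * ((|τ|:ℝ):ℂ))
      * ((p.factorial : ℂ)/((2*p).factorial : ℂ))
      * (((p+i).factorial : ℂ)/((i.factorial : ℂ)*((p-i).factorial : ℂ)))
      * (2*(a:ℂ))^(p-i) * ((|τ|:ℝ):ℂ)^(p-i)) * hcos τ
  simp only [hpt]
  rw [MeasureTheory.integral_finset_sum (range (p+1))
    (f := fun i τ => CC i * ((hmF a (p-i) (ω-b) τ + hmF a (p-i) (ω+b) τ)/2))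
    (fun i _ =>
      (((hmF_int ha (p-i) (ω-b)).add (hmF_int ha (p-i) (ω+b))).div_const 2).const_mul (CC i))]
  have hval : ∀ i ∈ range (p+1),
      ∫ τ : ℝ, CC i * ((hmF a (p-i) (ω-b) τ + hmF a (p-i) (ω+b) τ)/2)
      = (CC i * (((p-i).factorial : ℂ)/(((a:ℂ) - Complex.I*((ω-b:ℝ):ℂ))^(p-i+1))
            + ((p-i).factorial : ℂ)/(((a:ℂ) + Complex.I*((ω-b:ℝ):ℂ))^(p-i+1))))/2
        + (CC i * (((p-i).factorial : ℂ)/(((a:ℂ) - Complex.I*((ω+b:ℝ):ℂ))^(p-i+1))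
            + ((p-i).factorial : ℂ)/(((a:ℂ) + Complex.I*((ω+b:ℝ):ℂ))^(p-i+1))))/2 := by
    intro i _
    rw [integral_const_mul, integral_div,
      integral_add (hmF_int ha (p-i) (ω-b)) (hmF_int ha (p-i) (ω+b)),
      hmF_val ha (p-i) (ω-b), hmF_val ha (p-i) (ω+b)]
    ring
  rw [Finset.sum_congr rfl hval, Finset.sum_add_distrib, ← Finset.sum_div, ← Finset.sum_div]
  simp only [hCC]
  rw [Mval ha p (ω-b), Mval ha p (ω+b)]
  push_cast
  ring
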